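/- Let R be a Dedekind domain with torsion ideal class group and E an infinite set of maximal ideals of R. Let π : R → S := ∏_{𝔭∈E} R/𝔭 be the canonical map. Then Im π* = E ∪ {0}, and for every prime ideal P of S containing the direct sum ideal ⊕_{𝔭∈E} R/𝔭 one has π⁻¹(P) = 0. -/

import Mathlib

open Classical in
/-- Key lemma: any prime of the product containing all finitely supported elements
contracts to `⊥`. -/
theorem aux_wild_comap_bot {R : Type*} [CommRing R] [IsDedekindDomain R]
    (E : Set (PrimeSpectrum R)) (hmax : ∀ p ∈ E, p.asIdeal.IsMaximal)
    (P : Ideal (∀ p : E, R ⧸ (p : PrimeSpectrum R).asIdeal)) (hP : P.IsPrime)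
    (hD : ∀ f : ∀ p : E, R ⧸ (p : PrimeSpectrum R).asIdeal,
      {p | f p ≠ 0}.Finite → f ∈ P) :
    P.comap (Pi.ringHom fun p : E => Ideal.Quotient.mk (p : PrimeSpectrum R).asIdeal) = ⊥ := by
  set π := Pi.ringHom fun p : E => Ideal.Quotient.mk (p : PrimeSpectrum R).asIdeal with hπ
  refine le_antisymm ?_ bot_le
  intro x hx
  rw [Submodule.mem_bot]
  by_contra hx0
  -- the set of primes in E containing x is finite
  have hFfin : {p : E | x ∈ (p : PrimeSpectrum R).asIdeal}.Finite := by
    have h1 : {v : IsDedekindDomain.HeightOneSpectrum R |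
        v.asIdeal ∣ Ideal.span {x}}.Finite :=
      Ideal.finite_factors (by simpa [Ideal.span_singleton_eq_bot] using hx0)
    apply Set.Finite.of_finite_image (f := fun p : E => (p : PrimeSpectrum R).asIdeal)
    · refine ((h1.image fun v => v.asIdeal).subset ?_)
      rintro _ ⟨p, hp, rfl⟩
      simp only [Set.mem_setOf_eq] at hp
      have hne : (p : PrimeSpectrum R).asIdeal ≠ ⊥ := by
        intro h
        rw [h] at hp
        exact hx0 ((Submodule.mem_bot R).mp hp)
      refine ⟨⟨(p : PrimeSpectrum R).asIdeal, (p : PrimeSpectrum R).isPrime, hne⟩, ?_, rfl⟩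
      simpa [Ideal.dvd_iff_le, Ideal.span_le] using hp
    · intro p _ q _ h
      exact Subtype.ext (PrimeSpectrum.ext h)
  -- build a unit u = π x + indicator
  set u : ∀ p : E, R ⧸ (p : PrimeSpectrum R).asIdeal :=
    fun p => π x p + (if x ∈ (p : PrimeSpectrum R).asIdeal then 1 else 0) with hu_def
  have hucomp : ∀ p : E, IsUnit (u p) := by
    intro p
    haveI := hmax p p.2
    by_cases h : x ∈ (p : PrimeSpectrum R).asIdeal
    · have hz : Ideal.Quotient.mk (p : PrimeSpectrum R).asIdeal x = 0 :=
        Ideal.Quotient.eq_zero_iff_mem.mpr h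
      have : u p = 1 := by
        simp only [hu_def, hπ, Pi.ringHom, RingHom.pi_apply, if_pos h]
        rw [hz, zero_add]
      rw [this]; exact isUnit_one
    · have hne : u p ≠ 0 := by
        simp only [hu_def, hπ, Pi.ringHom, RingHom.pi_apply, if_neg h, add_zero]
        simpa [Ideal.Quotient.eq_zero_iff_mem] using h
      have hup : u p = Ideal.Quotient.mk (p : PrimeSpectrum R).asIdeal x + 0 := by
        simp [hu_def, hπ, Pi.ringHom, RingHom.pi_apply, if_neg h]
      obtain ⟨b, hb⟩ := Ideal.Quotient.exists_inv hne
      exact IsUnit.of_mul_eq_one _ hb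
  have hu : IsUnit u :=
    IsUnit.of_mul_eq_one (fun p => ↑(hucomp p).unit⁻¹)
      (funext fun p => (hucomp p).mul_val_inv)
  -- u - π x is finitely supported, hence in P
  have hd : u - π x ∈ P := by
    apply hD
    refine hFfin.subset ?_
    intro p hp
    simp only [Set.mem_setOf_eq] at hp ⊢
    by_contra h
    apply hp
    show u p - π x p = 0
    simp [hu_def, if_neg h]
  have humem : u ∈ P := by
    have := P.add_mem (Ideal.mem_comap.mp hx) hd
    simpa using this
  exact hP.ne_top (Ideal.eq_top_of_isUnit_mem P humem hu)

/-- Let `R` be a Dedekind domain with torsion ideal class group and `E` an infinite set of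
maximal ideals of `R`. Let `π : R → S = ∏_{𝔭∈E} R/𝔭` be the canonical map. Then
`Im π* = E ∪ {0}` and every prime of `S` containing the direct sum ideal `⊕_{𝔭∈E} R/𝔭`
contracts to `0`. -/
theorem stmt_12 {R : Type*} [CommRing R] [IsDedekindDomain R]
    (htor : Monoid.IsTorsion (ClassGroup R))
    (E : Set (PrimeSpectrum R)) (hmax : ∀ p ∈ E, p.asIdeal.IsMaximal) (hInf : E.Infinite) :
    Set.range
        (PrimeSpectrum.comap
          (Pi.ringHom fun p : E => Ideal.Quotient.mk (p : PrimeSpectrum R).asIdeal)) =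
        insert ⟨⊥, Ideal.bot_prime⟩ E ∧
      ∀ P : Ideal (∀ p : E, R ⧸ (p : PrimeSpectrum R).asIdeal), P.IsPrime →
        (∀ f : ∀ p : E, R ⧸ (p : PrimeSpectrum R).asIdeal,
          {p | f p ≠ 0}.Finite → f ∈ P) →
        P.comap (Pi.ringHom fun p : E => Ideal.Quotient.mk (p : PrimeSpectrum R).asIdeal)
          = ⊥ := by
  classical
  set π := Pi.ringHom fun p : E => Ideal.Quotient.mk (p : PrimeSpectrum R).asIdeal with hπ
  -- the direct sum ideal
  set D : Ideal (∀ p : E, R ⧸ (p : PrimeSpectrum R).asIdeal) :=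
    { carrier := {f | {p | f p ≠ 0}.Finite}
      zero_mem' := by simp
      add_mem' := by
        intro a b ha hb
        refine (ha.union hb).subset ?_
        intro p hp
        by_contra h
        simp only [Set.mem_union, Set.mem_setOf_eq, not_or, not_not] at h
        exact hp (by simp [Pi.add_apply, h.1, h.2])
      smul_mem' := by
        intro c f hf
        refine hf.subset ?_
        intro p hp
        by_contra h
        simp only [Set.mem_setOf_eq, not_not] at h
        exact hp (by simp [h]) } with hD_def
  refine ⟨?_, fun P hP hDP => aux_wild_comap_bot E hmax P hP hDP⟩
  -- D is proper
  have hDne : D ≠ ⊤ := by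
    intro h
    have h1 : (1 : ∀ p : E, R ⧸ (p : PrimeSpectrum R).asIdeal) ∈ D := h ▸ Submodule.mem_top
    have hfin : {p : E | (1 : ∀ p : E, R ⧸ (p : PrimeSpectrum R).asIdeal) p ≠ 0}.Finite := h1
    have huniv : {p : E | (1 : ∀ p : E, R ⧸ (p : PrimeSpectrum R).asIdeal) p ≠ 0} =
        Set.univ := by
      ext p
      haveI := hmax p p.2
      simp [Pi.one_apply, one_ne_zero]
    rw [huniv] at hfin
    haveI : Infinite E := Set.infinite_coe_iff.mpr hInf
    exact Set.infinite_univ hfin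
  apply Set.eq_of_subset_of_subset
  · -- range ⊆ insert ⊥ E
    rintro _ ⟨Q, rfl⟩
    by_cases hcase : ∀ p : E,
        (fun q : E => if q = p then (1 : R ⧸ (q : PrimeSpectrum R).asIdeal) else 0)
          ∈ Q.asIdeal
    · -- all idempotents in Q: Q contains D, contracts to ⊥
      left
      apply PrimeSpectrum.ext
      rw [PrimeSpectrum.comap_asIdeal]
      refine aux_wild_comap_bot E hmax Q.asIdeal Q.isPrime ?_
      intro f hf
      have : f = ∑ p ∈ hf.toFinset,
          f * (fun q : E => if q = p then (1 : R ⧸ (q : PrimeSpectrum R).asIdeal) else 0) := by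
        funext q
        rw [Finset.sum_apply]
        by_cases hq : f q = 0
        · rw [hq]
          refine (Finset.sum_eq_zero ?_).symm
          intro p hp
          by_cases h : q = p
          · subst h; simp [hq]
          · simp [h]
        · rw [Finset.sum_eq_single q]
          · simp
          · intro p hp hpq
            simp [Ne.symm hpq]
          · intro h
            exact absurd (hf.mem_toFinset.mpr hq) h
      rw [this]
      exact Ideal.sum_mem _ fun p hp => Q.asIdeal.mul_mem_left _ (hcase p)
    · -- some idempotent e_p ∉ Q: contraction is p
      right
      push_neg at hcase
      obtain ⟨p, hp⟩ := hcase
      set e : ∀ q : E, R ⧸ (q : PrimeSpectrum R).asIdeal :=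
        fun q => if q = p then 1 else 0 with he_def
      have h1e : (1 : ∀ q : E, R ⧸ (q : PrimeSpectrum R).asIdeal) - e ∈ Q.asIdeal := by
        have hmul : e * ((1 : ∀ q : E, R ⧸ (q : PrimeSpectrum R).asIdeal) - e) = 0 := by
          funext q
          by_cases h : q = p <;> simp [he_def, h]
        rcases (Q.isPrime.mem_or_mem (hmul ▸ Q.asIdeal.zero_mem)) with h | h
        · exact absurd h hp
        · exact h
      have key : (PrimeSpectrum.comap π Q).asIdeal = (p : PrimeSpectrum R).asIdeal := by
        rw [PrimeSpectrum.comap_asIdeal]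
        apply le_antisymm
        · intro x hx
          rw [Ideal.mem_comap] at hx
          by_contra hxp
          -- π x * e ∈ Q, has invertible component at p
          have hxe : π x * e ∈ Q.asIdeal := Q.asIdeal.mul_mem_right _ hx
          obtain ⟨y, i, hi, hyi⟩ := (hmax _ p.2).exists_inv hxp
          have hmk : Ideal.Quotient.mk ((p : PrimeSpectrum R)).asIdeal y *
              Ideal.Quotient.mk ((p : PrimeSpectrum R)).asIdeal x = 1 := by
            have h1 : Ideal.Quotient.mk ((p : PrimeSpectrum R)).asIdeal (y * x + i) = 1 := by
              rw [hyi, map_one]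
            rw [map_add, map_mul, Ideal.Quotient.eq_zero_iff_mem.mpr hi, add_zero] at h1
            exact h1
          have hep : e ∈ Q.asIdeal := by
            have heq : π y * (π x * e) = e := by
              funext q
              by_cases h : q = p
              · subst h
                simp only [Pi.mul_apply, he_def, if_pos rfl, mul_one, hπ,
                  Pi.ringHom, RingHom.pi_apply]
                simpa using hmk
              · simp [he_def, h]
            exact heq ▸ Q.asIdeal.mul_mem_left _ hxe
          exact hp hep
        · intro x hx
          rw [Ideal.mem_comap]
          have hsplit : π x = π x * e + π x *
              ((1 : ∀ q : E, R ⧸ (q : PrimeSpectrum R).asIdeal) - e) := by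
            ring
          have hpe : π x * e = 0 := by
            funext q
            by_cases h : q = p
            · subst h
              simp [he_def, hπ, Pi.ringHom, RingHom.pi_apply, Ideal.Quotient.eq_zero_iff_mem, hx]
            · simp [he_def, h]
          rw [hsplit, hpe, zero_add]
          exact Q.asIdeal.mul_mem_left _ h1e
      have : PrimeSpectrum.comap π Q = (p : PrimeSpectrum R) := PrimeSpectrum.ext key
      rw [this]
      exact p.2
  · -- insert ⊥ E ⊆ range
    intro q hq
    rcases hq with hq | hq
    · -- ⊥ comes from a maximal ideal containing D
      obtain ⟨M, hM, hDM⟩ := Ideal.exists_le_maximal D hDne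
      refine ⟨⟨M, hM.isPrime⟩, ?_⟩
      apply PrimeSpectrum.ext
      rw [PrimeSpectrum.comap_asIdeal, hq]
      exact aux_wild_comap_bot E hmax M hM.isPrime fun f hf => hDM hf
    · -- q ∈ E comes from the kernel of the projection
      haveI := hmax q hq
      refine ⟨PrimeSpectrum.comap
        (Pi.evalRingHom (fun p : E => R ⧸ (p : PrimeSpectrum R).asIdeal) ⟨q, hq⟩)
        ⟨⊥, Ideal.bot_prime⟩, ?_⟩
      apply PrimeSpectrum.ext
      rw [← PrimeSpectrum.comap_comp_apply, PrimeSpectrum.comap_asIdeal]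
      ext x
      simp [Ideal.mem_comap, hπ, Pi.ringHom, RingHom.pi_apply, Ideal.Quotient.eq_zero_iff_mem]
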